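/- Let X, X', Y, Z be finite-valued random variables such that I(Y; Z | (X, X')) = 0 (Z is a representation of X), I(Y; X | X') = 0 (X is redundant with respect to X' for Y), and I(X; X' | Z) = 0 (Z is sufficient for X'). Then I(X; Y | Z) = 0, i.e., Z is also sufficient for Y. -/

import Mathlib

/-
Discrete probability setup: a finite sample space `Ω` with weight function `p`
(nonnegative, summing to 1).  Random variables are functions out of `Ω` into
nonempty finite sets.  `pr p X x = P(X = x)`, `ent` is Shannon entropy
(natural log, with `0 · log 0 = 0` since `Real.log 0 = 0`), `mi` is mutual
information `I(X;Y) = H(X) + H(Y) - H(X,Y)`, and `cmi` is conditional mutual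
information `I(X;Y|W) = ∑ w, P(W=w) · I(X;Y | W=w)` computed with respect to
the conditional distribution `condp p W w` (terms with `P(W=w)=0` vanish).
`klDivF` is the discrete Kullback–Leibler divergence with the convention that
terms with `p s = 0` contribute `0` (indeed `0 * log 0 = 0` in Lean).
-/

open scoped Classical
open Finset

noncomputable def pr {Ω α : Type*} [Fintype Ω] (p : Ω → ℝ) (X : Ω → α) (x : α) : ℝ :=
  ∑ ω, if X ω = x then p ω else 0

noncomputable def ent {Ω α : Type*} [Fintype Ω] [Fintype α] (p : Ω → ℝ) (X : Ω → α) : ℝ :=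
  -∑ x, pr p X x * Real.log (pr p X x)

noncomputable def mi {Ω α β : Type*} [Fintype Ω] [Fintype α] [Fintype β]
    (p : Ω → ℝ) (X : Ω → α) (Y : Ω → β) : ℝ :=
  ent p X + ent p Y - ent p (fun ω => (X ω, Y ω))

noncomputable def condp {Ω γ : Type*} [Fintype Ω] (p : Ω → ℝ) (W : Ω → γ) (w : γ) : Ω → ℝ :=
  fun ω => if W ω = w then p ω / pr p W w else 0

noncomputable def cmi {Ω α β γ : Type*} [Fintype Ω] [Fintype α] [Fintype β] [Fintype γ]
    (p : Ω → ℝ) (X : Ω → α) (Y : Ω → β) (W : Ω → γ) : ℝ :=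
  ∑ w, pr p W w * mi (condp p W w) X Y

noncomputable def klDivF {S : Type*} [Fintype S] (p q : S → ℝ) : ℝ :=
  ∑ s, p s * Real.log (p s / q s)

section Helpers
variable {Ω α β γ : Type*} [Fintype Ω]

lemma pr_nonneg (p : Ω → ℝ) (hp : ∀ ω, 0 ≤ p ω) (X : Ω → α) (x : α) : 0 ≤ pr p X x := by
  apply Finset.sum_nonneg
  intro ω _
  split
  · exact hp ω
  · exact le_refl 0

lemma pr_sum [Fintype α] (p : Ω → ℝ) (X : Ω → α) : ∑ x, pr p X x = ∑ ω, p ω := by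
  unfold pr
  rw [Finset.sum_comm]
  exact Finset.sum_congr rfl fun ω _ => by simp

lemma pr_marg_right [Fintype β] (p : Ω → ℝ) (X : Ω → α) (Y : Ω → β) (x : α) :
    pr p X x = ∑ y, pr p (fun ω => (X ω, Y ω)) (x, y) := by
  unfold pr
  rw [Finset.sum_comm]
  refine Finset.sum_congr rfl fun ω _ => ?_
  by_cases h : X ω = x <;> simp [h, Prod.ext_iff]

lemma pr_marg_left [Fintype α] (p : Ω → ℝ) (X : Ω → α) (Y : Ω → β) (y : β) :
    pr p Y y = ∑ x, pr p (fun ω => (X ω, Y ω)) (x, y) := by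
  unfold pr
  rw [Finset.sum_comm]
  refine Finset.sum_congr rfl fun ω _ => ?_
  by_cases h : Y ω = y <;> simp [h, Prod.ext_iff]

lemma pr_comp_inj (p : Ω → ℝ) (X : Ω → α) (f : α → β) (hf : Function.Injective f) (x : α) :
    pr p (fun ω => f (X ω)) (f x) = pr p X x := by
  unfold pr
  exact Finset.sum_congr rfl fun ω _ => by simp [hf.eq_iff]

lemma pr_comp_not_mem (p : Ω → ℝ) (X : Ω → α) (f : α → β) (y : β)
    (hy : ∀ x, f x ≠ y) : pr p (fun ω => f (X ω)) y = 0 := by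
  unfold pr
  exact Finset.sum_eq_zero fun ω _ => by simp [hy (X ω)]

lemma ent_comp_inj [Fintype α] [Fintype β] (p : Ω → ℝ) (X : Ω → α)
    (f : α → β) (hf : Function.Injective f) :
    ent p (fun ω => f (X ω)) = ent p X := by
  unfold ent
  congr 1
  set F : β → ℝ := fun y => pr p (fun ω => f (X ω)) y * Real.log (pr p (fun ω => f (X ω)) y) with hF
  have h1 : ∑ y ∈ Finset.univ.image f, F y = ∑ y : β, F y := by
    apply Finset.sum_subset (Finset.subset_univ _)
    intro y _ hy
    have hne : ∀ x, f x ≠ y := fun x hx => hy (Finset.mem_image.2 ⟨x, Finset.mem_univ x, hx⟩)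
    simp [hF, pr_comp_not_mem p X f y hne]
  have h2 : ∑ y ∈ Finset.univ.image f, F y = ∑ x : α, F (f x) :=
    Finset.sum_image (fun a _ b _ h => hf h)
  rw [← h1, h2]
  refine Finset.sum_congr rfl fun x _ => ?_
  show pr p (fun ω => f (X ω)) (f x) * Real.log (pr p (fun ω => f (X ω)) (f x)) = _
  rw [pr_comp_inj p X f hf x]

lemma ent_eq_of_comp [Fintype α] [Fintype β] (p : Ω → ℝ) (S : Ω → β) (X : Ω → α)
    (f : α → β) (hf : Function.Injective f) (h : ∀ ω, S ω = f (X ω)) :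
    ent p S = ent p X := by
  rw [show S = fun ω => f (X ω) from funext h]
  exact ent_comp_inj p X f hf
end Helpers

section Cond
variable {Ω α β γ : Type*} [Fintype Ω]

lemma pr_condp (p : Ω → ℝ) (W : Ω → γ) (w : γ) (T : Ω → α) (x : α) :
    pr (condp p W w) T x = pr p (fun ω => (T ω, W ω)) (x, w) / pr p W w := by
  unfold condp
  unfold pr
  rw [Finset.sum_div]
  refine Finset.sum_congr rfl fun ω _ => ?_
  by_cases h1 : T ω = x <;> by_cases h2 : W ω = w <;> simp [h1, h2, Prod.ext_iff]

lemma condp_nonneg (p : Ω → ℝ) (hp : ∀ ω, 0 ≤ p ω) (W : Ω → γ) (w : γ) (ω : Ω) :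
    0 ≤ condp p W w ω := by
  unfold condp
  split
  · exact div_nonneg (hp ω) (pr_nonneg p hp W w)
  · exact le_refl 0

lemma condp_sum (p : Ω → ℝ) (W : Ω → γ) (w : γ) (hw : pr p W w ≠ 0) :
    ∑ ω, condp p W w ω = 1 := by
  have key : ∑ ω, condp p W w ω = pr p W w / pr p W w := by
    unfold condp
    unfold pr
    rw [Finset.sum_div]
    refine Finset.sum_congr rfl fun ω _ => ?_
    by_cases h : W ω = w <;> simp [h]
  rw [key]
  exact div_self hw

lemma pr_pair_le (p : Ω → ℝ) (hp : ∀ ω, 0 ≤ p ω) (T : Ω → α) (W : Ω → γ) (x : α) (w : γ) :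
    pr p (fun ω => (T ω, W ω)) (x, w) ≤ pr p W w := by
  unfold pr
  refine Finset.sum_le_sum fun ω _ => ?_
  by_cases h1 : T ω = x <;> by_cases h2 : W ω = w <;> simp [h1, h2, Prod.ext_iff, hp ω]

lemma pr_pair_eq_zero (p : Ω → ℝ) (hp : ∀ ω, 0 ≤ p ω) (T : Ω → α) (W : Ω → γ) (x : α) (w : γ)
    (hw : pr p W w = 0) : pr p (fun ω => (T ω, W ω)) (x, w) = 0 :=
  le_antisymm (hw ▸ pr_pair_le p hp T W x w) (pr_nonneg p hp _ _)

lemma sum_pr_mul_ent [Fintype α] [Fintype γ] (p : Ω → ℝ) (hp : ∀ ω, 0 ≤ p ω)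
    (T : Ω → α) (W : Ω → γ) :
    ∑ w, pr p W w * ent (condp p W w) T
      = ent p (fun ω => (T ω, W ω)) - ent p W := by
  set J : α → γ → ℝ := fun x w => pr p (fun ω => (T ω, W ω)) (x, w) with hJ
  have step : ∀ w, pr p W w * ent (condp p W w) T
      = (-∑ x, J x w * Real.log (J x w)) + pr p W w * Real.log (pr p W w) := by
    intro w
    by_cases hc : pr p W w = 0
    · have hz : ∀ x, J x w = 0 := fun x => pr_pair_eq_zero p hp T W x w hc
      simp [hc, hz]
    · have hent : ent (condp p W w) T
          = -∑ x, (J x w / pr p W w) * Real.log (J x w / pr p W w) := by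
        unfold ent
        congr 1
        exact Finset.sum_congr rfl fun x _ => by rw [pr_condp p W w T x]
      have hterm : ∀ x, pr p W w * ((J x w / pr p W w) * Real.log (J x w / pr p W w))
          = J x w * Real.log (J x w) - J x w * Real.log (pr p W w) := by
        intro x
        by_cases hx : J x w = 0
        · simp [hx]
        · rw [Real.log_div hx hc]
          field_simp
      have hmarg : ∑ x, J x w = pr p W w := (pr_marg_left p T W w).symm
      rw [hent, mul_neg, Finset.mul_sum, Finset.sum_congr rfl fun x _ => hterm x,
        Finset.sum_sub_distrib, ← Finset.sum_mul, hmarg]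
      ring
  rw [Finset.sum_congr rfl fun w _ => step w, Finset.sum_add_distrib]
  have key : ∑ q : α × γ, pr p (fun ω => (T ω, W ω)) q * Real.log (pr p (fun ω => (T ω, W ω)) q)
      = ∑ w : γ, ∑ x : α, J x w * Real.log (J x w) := by
    rw [Fintype.sum_prod_type, Finset.sum_comm]
  unfold ent
  rw [key, Finset.sum_neg_distrib]
  ring

end Cond

section MI
variable {Ω α β γ : Type*} [Fintype Ω]

lemma pr_pair_le_left (p : Ω → ℝ) (hp : ∀ ω, 0 ≤ p ω) (X : Ω → α) (Y : Ω → β) (x : α) (y : β) :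
    pr p (fun ω => (X ω, Y ω)) (x, y) ≤ pr p X x := by
  unfold pr
  refine Finset.sum_le_sum fun ω _ => ?_
  by_cases h1 : X ω = x <;> by_cases h2 : Y ω = y <;> simp [h1, h2, Prod.ext_iff, hp ω]

lemma cmi_eq [Fintype α] [Fintype β] [Fintype γ] (p : Ω → ℝ) (hp : ∀ ω, 0 ≤ p ω)
    (X : Ω → α) (Y : Ω → β) (W : Ω → γ) :
    cmi p X Y W = ent p (fun ω => (X ω, W ω)) + ent p (fun ω => (Y ω, W ω))
      - ent p (fun ω => ((X ω, Y ω), W ω)) - ent p W := by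
  unfold cmi mi
  have expand : ∀ w, pr p W w * (ent (condp p W w) X + ent (condp p W w) Y
        - ent (condp p W w) (fun ω => (X ω, Y ω)))
      = pr p W w * ent (condp p W w) X + pr p W w * ent (condp p W w) Y
        - pr p W w * ent (condp p W w) (fun ω => (X ω, Y ω)) := fun w => by ring
  rw [Finset.sum_congr rfl fun w _ => expand w, Finset.sum_sub_distrib, Finset.sum_add_distrib,
    sum_pr_mul_ent p hp X W, sum_pr_mul_ent p hp Y W,
    sum_pr_mul_ent p hp (fun ω => (X ω, Y ω)) W]
  ring

lemma mi_nonneg [Fintype α] [Fintype β] (q : Ω → ℝ) (hq : ∀ ω, 0 ≤ q ω) (hs : ∑ ω, q ω = 1)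
    (X : Ω → α) (Y : Ω → β) : 0 ≤ mi q X Y := by
  set r : α → β → ℝ := fun x y => pr q (fun ω => (X ω, Y ω)) (x, y) with hrdef
  have hXa : ∀ x, pr q X x = ∑ y, r x y := fun x => pr_marg_right q X Y x
  have hYb : ∀ y, pr q Y y = ∑ x, r x y := fun y => pr_marg_left q X Y y
  have hr0 : ∀ x y, 0 ≤ r x y := fun x y => pr_nonneg q hq _ _
  have hra : ∀ x y, r x y ≤ pr q X x := fun x y => pr_pair_le_left q hq X Y x y
  have hrb : ∀ x y, r x y ≤ pr q Y y := fun x y => pr_pair_le q hq X Y x y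
  have hA : ∑ x, pr q X x * Real.log (pr q X x)
      = ∑ x, ∑ y, r x y * Real.log (pr q X x) := by
    refine Finset.sum_congr rfl fun x _ => ?_
    rw [← Finset.sum_mul, ← hXa x]
  have hB : ∑ y, pr q Y y * Real.log (pr q Y y)
      = ∑ x, ∑ y, r x y * Real.log (pr q Y y) := by
    rw [Finset.sum_comm]
    refine Finset.sum_congr rfl fun y _ => ?_
    rw [← Finset.sum_mul, ← hYb y]
  have hC : ∑ z : α × β, pr q (fun ω => (X ω, Y ω)) z * Real.log (pr q (fun ω => (X ω, Y ω)) z)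
      = ∑ x, ∑ y, r x y * Real.log (r x y) := by
    rw [Fintype.sum_prod_type]
  have hmi : mi q X Y = ∑ x, ∑ y, (r x y * Real.log (r x y)
      - r x y * Real.log (pr q X x) - r x y * Real.log (pr q Y y)) := by
    unfold mi ent
    rw [hC, hA, hB]
    simp only [Finset.sum_sub_distrib]
    ring
  have key : ∀ x y, r x y - pr q X x * pr q Y y
      ≤ r x y * Real.log (r x y) - r x y * Real.log (pr q X x)
        - r x y * Real.log (pr q Y y) := by
    intro x y
    by_cases h : r x y = 0
    · have : 0 ≤ pr q X x * pr q Y y :=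
        mul_nonneg (pr_nonneg q hq X x) (pr_nonneg q hq Y y)
      simp [h]
      linarith
    · have hrpos : 0 < r x y := lt_of_le_of_ne (hr0 x y) (Ne.symm h)
      have hapos : 0 < pr q X x := lt_of_lt_of_le hrpos (hra x y)
      have hbpos : 0 < pr q Y y := lt_of_lt_of_le hrpos (hrb x y)
      have hlog := Real.log_le_sub_one_of_pos
        (show 0 < pr q X x * pr q Y y / r x y by positivity)
      rw [Real.log_div (by positivity) h,
        Real.log_mul (ne_of_gt hapos) (ne_of_gt hbpos)] at hlog
      have hmul := mul_le_mul_of_nonneg_left hlog (le_of_lt hrpos)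
      have hx : r x y * (pr q X x * pr q Y y / r x y - 1)
          = pr q X x * pr q Y y - r x y := by
        field_simp
      rw [hx] at hmul
      nlinarith [hmul]
  have S1 : ∑ x, ∑ y, r x y = 1 := by
    have : ∑ x, ∑ y, r x y = ∑ x, pr q X x :=
      Finset.sum_congr rfl fun x _ => (hXa x).symm
    rw [this, pr_sum, hs]
  have S2 : ∑ x, pr q X x = 1 := by rw [pr_sum, hs]
  have S3 : ∑ y, pr q Y y = 1 := by rw [pr_sum, hs]
  have Sab : ∑ x, ∑ y, pr q X x * pr q Y y = 1 := by
    have : ∀ x, ∑ y, pr q X x * pr q Y y = pr q X x := by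
      intro x
      rw [← Finset.mul_sum, S3, mul_one]
    rw [Finset.sum_congr rfl fun x _ => this x, S2]
  have hsumle : ∑ x, ∑ y, (r x y - pr q X x * pr q Y y)
      ≤ ∑ x, ∑ y, (r x y * Real.log (r x y) - r x y * Real.log (pr q X x)
        - r x y * Real.log (pr q Y y)) :=
    Finset.sum_le_sum fun x _ => Finset.sum_le_sum fun y _ => key x y
  have base : ∑ x, ∑ y, (r x y - pr q X x * pr q Y y) = 0 := by
    simp only [Finset.sum_sub_distrib]
    rw [S1, Sab]
    ring
  rw [hmi]
  linarith

lemma cmi_nonneg [Fintype α] [Fintype β] [Fintype γ] (p : Ω → ℝ) (hp : ∀ ω, 0 ≤ p ω)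
    (X : Ω → α) (Y : Ω → β) (W : Ω → γ) : 0 ≤ cmi p X Y W := by
  unfold cmi
  refine Finset.sum_nonneg fun w _ => ?_
  by_cases hw : pr p W w = 0
  · simp [hw]
  · exact mul_nonneg (pr_nonneg p hp W w)
      (mi_nonneg (condp p W w) (condp_nonneg p hp W w) (condp_sum p W w hw) X Y)

end MI

/-- If `Z` is a representation of `X` (`I(Y;Z|(X,X')) = 0`),
`X` is redundant w.r.t. `X'` for `Y` (`I(Y;X|X') = 0`), and `Z` is sufficient
for `X'` (`I(X;X'|Z) = 0`), then `Z` is sufficient for `Y`: `I(X;Y|Z) = 0`. -/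
theorem sufficient_for_target
    {Ω 𝒳 𝒳' 𝒴 𝒵 : Type*} [Fintype Ω] [Fintype 𝒳] [Fintype 𝒳'] [Fintype 𝒴] [Fintype 𝒵]
    [Nonempty 𝒳] [Nonempty 𝒳'] [Nonempty 𝒴] [Nonempty 𝒵]
    (p : Ω → ℝ) (hp : ∀ ω, 0 ≤ p ω) (hsum : ∑ ω, p ω = 1)
    (X : Ω → 𝒳) (X' : Ω → 𝒳') (Y : Ω → 𝒴) (Z : Ω → 𝒵)
    (hrep : cmi p Y Z (fun ω => (X ω, X' ω)) = 0)
    (hred : cmi p Y X X' = 0)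
    (hsuf : cmi p X X' Z = 0) :
    cmi p X Y Z = 0 := by
  have h1 : cmi p Y Z (fun ω => (X ω, X' ω))
      = ent p (fun ω => (Y ω, (X ω, X' ω))) + ent p (fun ω => (Z ω, (X ω, X' ω)))
        - ent p (fun ω => ((Y ω, Z ω), (X ω, X' ω))) - ent p (fun ω => (X ω, X' ω)) :=
    cmi_eq p hp Y Z (fun ω => (X ω, X' ω))
  have h2 : cmi p Y X X'
      = ent p (fun ω => (Y ω, X' ω)) + ent p (fun ω => (X ω, X' ω))
        - ent p (fun ω => ((Y ω, X ω), X' ω)) - ent p X' :=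
    cmi_eq p hp Y X X'
  have h3 : cmi p X X' Z
      = ent p (fun ω => (X ω, Z ω)) + ent p (fun ω => (X' ω, Z ω))
        - ent p (fun ω => ((X ω, X' ω), Z ω)) - ent p Z :=
    cmi_eq p hp X X' Z
  have h4 : cmi p X Y Z
      = ent p (fun ω => (X ω, Z ω)) + ent p (fun ω => (Y ω, Z ω))
        - ent p (fun ω => ((X ω, Y ω), Z ω)) - ent p Z :=
    cmi_eq p hp X Y Z
  have h5 : cmi p X X' (fun ω => (Y ω, Z ω))
      = ent p (fun ω => (X ω, (Y ω, Z ω))) + ent p (fun ω => (X' ω, (Y ω, Z ω)))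
        - ent p (fun ω => ((X ω, X' ω), (Y ω, Z ω))) - ent p (fun ω => (Y ω, Z ω)) :=
    cmi_eq p hp X X' (fun ω => (Y ω, Z ω))
  have h6 : cmi p Z Y X'
      = ent p (fun ω => (Z ω, X' ω)) + ent p (fun ω => (Y ω, X' ω))
        - ent p (fun ω => ((Z ω, Y ω), X' ω)) - ent p X' :=
    cmi_eq p hp Z Y X'
  have n4 := cmi_nonneg p hp X Y Z
  have n5 := cmi_nonneg p hp X X' (fun ω => (Y ω, Z ω))
  have n6 := cmi_nonneg p hp Z Y X'
  have q1 : ent p (fun ω => (Y ω, (X ω, X' ω)))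
      = ent p (fun ω => (X ω, (X' ω, Y ω))) :=
    ent_eq_of_comp p _ _ (fun t => (t.2.2, (t.1, t.2.1)))
      (fun u v h => by simp only [Prod.ext_iff] at h ⊢; tauto) (fun ω => rfl)
  have q2 : ent p (fun ω => (Z ω, (X ω, X' ω)))
      = ent p (fun ω => (X ω, (X' ω, Z ω))) :=
    ent_eq_of_comp p _ _ (fun t => (t.2.2, (t.1, t.2.1)))
      (fun u v h => by simp only [Prod.ext_iff] at h ⊢; tauto) (fun ω => rfl)
  have q3 : ent p (fun ω => ((Y ω, Z ω), (X ω, X' ω)))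
      = ent p (fun ω => (X ω, (X' ω, (Y ω, Z ω)))) :=
    ent_eq_of_comp p _ _ (fun t => (t.2.2, (t.1, t.2.1)))
      (fun u v h => by simp only [Prod.ext_iff] at h ⊢; tauto) (fun ω => rfl)
  have q4 : ent p (fun ω => (Y ω, X' ω)) = ent p (fun ω => (X' ω, Y ω)) :=
    ent_eq_of_comp p _ _ (fun t => (t.2, t.1))
      (fun u v h => by simp only [Prod.ext_iff] at h ⊢; tauto) (fun ω => rfl)
  have q5 : ent p (fun ω => ((Y ω, X ω), X' ω))
      = ent p (fun ω => (X ω, (X' ω, Y ω))) :=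
    ent_eq_of_comp p _ _ (fun t => ((t.2.2, t.1), t.2.1))
      (fun u v h => by simp only [Prod.ext_iff] at h ⊢; tauto) (fun ω => rfl)
  have q6 : ent p (fun ω => ((X ω, X' ω), Z ω))
      = ent p (fun ω => (X ω, (X' ω, Z ω))) :=
    ent_eq_of_comp p _ _ (fun t => ((t.1, t.2.1), t.2.2))
      (fun u v h => by simp only [Prod.ext_iff] at h ⊢; tauto) (fun ω => rfl)
  have q7 : ent p (fun ω => ((X ω, Y ω), Z ω))
      = ent p (fun ω => (X ω, (Y ω, Z ω))) :=
    ent_eq_of_comp p _ _ (fun t => ((t.1, t.2.1), t.2.2))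
      (fun u v h => by simp only [Prod.ext_iff] at h ⊢; tauto) (fun ω => rfl)
  have q8 : ent p (fun ω => ((X ω, X' ω), (Y ω, Z ω)))
      = ent p (fun ω => (X ω, (X' ω, (Y ω, Z ω)))) :=
    ent_eq_of_comp p _ _ (fun t => ((t.1, t.2.1), t.2.2))
      (fun u v h => by simp only [Prod.ext_iff] at h ⊢; tauto) (fun ω => rfl)
  have q9 : ent p (fun ω => (Z ω, X' ω)) = ent p (fun ω => (X' ω, Z ω)) :=
    ent_eq_of_comp p _ _ (fun t => (t.2, t.1))
      (fun u v h => by simp only [Prod.ext_iff] at h ⊢; tauto) (fun ω => rfl)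
  have q10 : ent p (fun ω => ((Z ω, Y ω), X' ω))
      = ent p (fun ω => (X' ω, (Y ω, Z ω))) :=
    ent_eq_of_comp p _ _ (fun t => ((t.2.2, t.2.1), t.1))
      (fun u v h => by simp only [Prod.ext_iff] at h ⊢; tauto) (fun ω => rfl)
  linarith [h1, h2, h3, h4, h5, h6, n4, n5, n6, q1, q2, q3, q4, q5, q6, q7, q8, q9, q10,
    hrep, hred, hsuf]
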